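/- Let a, b ≥ 0 be integers, n = a+b+1, and R = ℤ[z_1,…,z_a, y_1,…,y_b, x]. Let M = D_X(Λ(a,b,0,1)) be the n×n matrix over R with rows and columns indexed by K ⊔ T ⊔ {*} (|K| = a, |T| = b): diagonal entries z_1,…,z_a on K, y_1,…,y_b on T, and x at *; off-diagonal entries: 1 between two distinct K-indices, 1 from a K-index to a T-index, 2 from a K-index to *, 2 from a T-index to a K-index, 2 between two distinct T-indices, 1 from a T-index to *, and 1 from * to every K-index and every T-index. Then det(M) = x·∏_{r=1}^{b}(y_r − 2)·∏_{s=1}^{a}(z_s − 1) − Σ_{r=1}^{b} (1 − 2x)·(∏_{r' ≠ r}(y_{r'} − 2))·∏_{s=1}^{a}(z_s − 1) − Σ_{s=1}^{a} (2 − x)·∏_{r=1}^{b}(y_r − 2)·(∏_{s' ≠ s}(z_{s'} − 1)). -/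

import Mathlib

open MvPolynomial Finset

/-- Variables: `z_1, …, z_a` (left), `y_1, …, y_b` (middle), `x` (right). -/
abbrev LVar (a b : ℕ) := Fin a ⊕ Fin b ⊕ Unit

/-- The matrix `D_X(Λ(a,b,0,1))`, with rows and columns indexed by `K ⊔ T ⊔ {*}`. -/
noncomputable def lambdaDX (a b : ℕ) :
    Matrix (Fin a ⊕ Fin b ⊕ Unit) (Fin a ⊕ Fin b ⊕ Unit) (MvPolynomial (LVar a b) ℤ) :=
  Matrix.of fun p q =>
    match p, q with
    | .inl i, .inl j => if i = j then X (.inl i) else 1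
    | .inl _, .inr (.inl _) => 1
    | .inl _, .inr (.inr _) => 2
    | .inr (.inl _), .inl _ => 2
    | .inr (.inl i), .inr (.inl j) => if i = j then X (.inr (.inl i)) else 2
    | .inr (.inl _), .inr (.inr _) => 1
    | .inr (.inr _), .inl _ => 1
    | .inr (.inr _), .inr (.inl _) => 1
    | .inr (.inr _), .inr (.inr _) => X (.inr (.inr ()))



lemma erase_inl_eq {ι κ : Type*} [Fintype ι] [Fintype κ] [DecidableEq ι] [DecidableEq κ]
    (i : ι) :
    (Finset.univ : Finset (ι ⊕ κ)).erase (Sum.inl i) = (Finset.univ.erase i).disjSum Finset.univ := by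
  ext p; cases p <;> simp

lemma erase_inr_eq {ι κ : Type*} [Fintype ι] [Fintype κ] [DecidableEq ι] [DecidableEq κ]
    (k : κ) :
    (Finset.univ : Finset (ι ⊕ κ)).erase (Sum.inr k) = Finset.univ.disjSum (Finset.univ.erase k) := by
  ext p; cases p <;> simp

lemma det_arrow {R : Type*} [CommRing R] {ι : Type*} [Fintype ι] [DecidableEq ι]
    (d u v : ι → R) (x : R) :
    (Matrix.fromBlocks (Matrix.diagonal d) (Matrix.of fun i (_ : Unit) => v i)
        (Matrix.of fun (_ : Unit) j => u j) (Matrix.of fun _ _ => x)).det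
      = x * ∏ i, d i - ∑ i, u i * v i * ∏ j ∈ Finset.univ.erase i, d j := by
  classical
  set M : Matrix (ι ⊕ Unit) (ι ⊕ Unit) R :=
    Matrix.fromBlocks (Matrix.diagonal d) (Matrix.of fun i (_ : Unit) => v i)
      (Matrix.of fun (_ : Unit) j => u j) (Matrix.of fun _ _ => x) with hM
  set st : ι ⊕ Unit := Sum.inr () with hst
  set g : Option ι → Equiv.Perm (ι ⊕ Unit) :=
    fun o => o.elim 1 fun k => Equiv.swap st (Sum.inl k) with hg
  have hginj : Function.Injective g := by
    intro o1 o2 h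
    have h2 : (g o1) st = (g o2) st := by rw [h]
    cases o1 <;> cases o2 <;>
      simp [hg, hst, Equiv.swap_apply_left] at h2 ⊢
    exact h2
  have hzero : ∀ σ ∈ (Finset.univ : Finset (Equiv.Perm (ι ⊕ Unit))),
      σ ∉ Finset.univ.image g → Equiv.Perm.sign σ • ∏ p, M (σ p) p = 0 := by
    intro σ _ hσ
    have hex : ∃ j : ι, σ (Sum.inl j) ≠ Sum.inl j ∧ σ (Sum.inl j) ≠ st := by
      by_contra hc
      push_neg at hc
      apply hσ
      by_cases hfix : ∀ j : ι, σ (Sum.inl j) = Sum.inl j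
      · refine Finset.mem_image.mpr ⟨none, Finset.mem_univ _, ?_⟩
        have hstfix : σ st = st := by
          rcases h' : σ st with j | u
          · exfalso
            have := σ.injective (h'.trans (hfix j).symm)
            simp [hst] at this
          · cases u; rfl
        ext p
        cases p with
        | inl j => simp [hg, hfix j]
        | inr u => cases u; simpa [hg, hst] using hstfix.symm
      · push_neg at hfix
        obtain ⟨j0, hj0⟩ := hfix
        have h0 : σ (Sum.inl j0) = st := hc j0 hj0
        refine Finset.mem_image.mpr ⟨some j0, Finset.mem_univ _, ?_⟩
        have hstv : σ st = Sum.inl j0 := by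
          obtain ⟨p, hp⟩ := σ.surjective (Sum.inl j0)
          cases p with
          | inl j =>
            exfalso
            by_cases hj : σ (Sum.inl j) = Sum.inl j
            · rw [hp] at hj
              exact hj0 (hj ▸ hp)
            · rw [hc j hj] at hp
              simp [hst] at hp
          | inr u => cases u; exact hp
        ext p
        cases p with
        | inl j =>
          by_cases hj : j = j0
          · subst hj
            simp [hg, Equiv.swap_apply_right, h0]
          · have hfj : σ (Sum.inl j) = Sum.inl j := by
              by_contra hne
              have := hc j hne
              rw [← h0] at this
              exact hj (Sum.inl.inj (σ.injective this))
            simp only [hg, Option.elim]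
            rw [Equiv.swap_apply_of_ne_of_ne (by simp [hst]) (by simp [hj])]
            exact hfj.symm
        | inr u =>
          cases u
          simp only [hg, Option.elim, ← hst]
          rw [Equiv.swap_apply_left]
          exact hstv.symm
    obtain ⟨j, h1, h2⟩ := hex
    have hprod : ∏ p, M (σ p) p = 0 := by
      apply Finset.prod_eq_zero (Finset.mem_univ (Sum.inl j))
      rcases h' : σ (Sum.inl j) with j' | u
      · rw [h'] at h1
        have : j' ≠ j := fun h => h1 (by rw [h])
        simp [hM, Matrix.diagonal, this]
      · cases u; rw [h'] at h2; simp [hst] at h2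
    rw [hprod, smul_zero]
  rw [Matrix.det_apply,
    ← Finset.sum_subset (Finset.subset_univ ((Finset.univ : Finset (Option ι)).image g)) hzero,
    Finset.sum_image (fun o1 _ o2 _ h => hginj h)]
  rw [show (Finset.univ : Finset (Option ι)) = Finset.insertNone Finset.univ from rfl,
    Finset.sum_insertNone]
  have hnone : Equiv.Perm.sign (g none) • ∏ p, M ((g none) p) p = x * ∏ i, d i := by
    simp only [hg, Option.elim]
    rw [Equiv.Perm.sign_one, one_smul]
    simp only [Equiv.Perm.coe_one, id_eq]
    rw [Fintype.prod_sum_type]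
    simp [hM, Matrix.diagonal, mul_comm]
  have hsome : ∀ k : ι, Equiv.Perm.sign (g (some k)) • ∏ p, M ((g (some k)) p) p
      = -(u k * v k * ∏ j ∈ Finset.univ.erase k, d j) := by
    intro k
    simp only [hg, Option.elim]
    rw [Equiv.Perm.sign_swap (by simp [hst])]
    rw [Fintype.prod_sum_type]
    have hcomp : ∀ i : ι, M (Equiv.swap st (Sum.inl k) (Sum.inl i)) (Sum.inl i)
        = if i = k then u k else d i := by
      intro i
      by_cases h : i = k
      · subst h
        rw [Equiv.swap_apply_right]
        simp [hM, hst]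
      · rw [Equiv.swap_apply_of_ne_of_ne (by simp [hst]) (by simp [h])]
        simp [hM, Matrix.diagonal, h]
    have hprodl : ∏ i : ι, M (Equiv.swap st (Sum.inl k) (Sum.inl i)) (Sum.inl i)
        = u k * ∏ j ∈ Finset.univ.erase k, d j := by
      simp only [hcomp]
      rw [← Finset.mul_prod_erase Finset.univ _ (Finset.mem_univ k), if_pos rfl]
      congr 1
      exact Finset.prod_congr rfl fun i hi => if_neg (Finset.ne_of_mem_erase hi)
    have hprodr : ∏ u' : Unit, M (Equiv.swap st (Sum.inl k) (Sum.inr u')) (Sum.inr u') = v k := by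
      rw [Fintype.prod_unique]
      rw [show (Sum.inr () : ι ⊕ Unit) = st from rfl, Equiv.swap_apply_left]
      simp [hM, hst]
    rw [hprodl, hprodr]
    simp only [Units.smul_def, Units.val_neg, Units.val_one, neg_smul, one_smul, zsmul_eq_mul,
      Int.cast_one, one_mul]
    ring
  rw [hnone, Finset.sum_congr rfl fun k _ => hsome k]
  rw [Finset.sum_neg_distrib]
  ring

theorem det_lambdaDX (a b : ℕ) :
    (lambdaDX a b).det =
      X (.inr (.inr ())) * (∏ r : Fin b, (X (.inr (.inl r)) - 2)) *
          (∏ s : Fin a, (X (.inl s) - 1)) -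
        (∑ r : Fin b, (1 - 2 * X (.inr (.inr ()))) *
          (∏ r' ∈ Finset.univ.erase r, (X (.inr (.inl r')) - 2)) *
          (∏ s : Fin a, (X (.inl s) - 1))) -
        (∑ s : Fin a, (2 - X (.inr (.inr ()))) *
          (∏ r : Fin b, (X (.inr (.inl r)) - 2)) *
          (∏ s' ∈ Finset.univ.erase s, (X (.inl s') - 1))) := by
  classical
  set R := MvPolynomial (LVar a b) ℤ with hR
  set xx : R := X (.inr (.inr ())) with hxx
  set star : LVar a b := Sum.inr (Sum.inr ()) with hstar
  set w : LVar a b → R := Sum.elim (fun _ => -1) (Sum.elim (fun _ => -2) fun _ => 0) with hw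
  set sv : LVar a b → R := fun q => if q = star then 1 else 0 with hsv
  set L : Matrix (LVar a b) (LVar a b) R :=
    1 + Matrix.replicateCol Unit w * Matrix.replicateRow Unit sv with hL
  have hdetL : L.det = 1 := by
    rw [hL, Matrix.det_one_add_replicateCol_mul_replicateRow]
    simp [hsv, dotProduct, hstar, hw]
  set dvec : Fin a ⊕ Fin b → R :=
    Sum.elim (fun s => X (.inl s) - 1) (fun r => X (.inr (.inl r)) - 2) with hd
  set vvec : Fin a ⊕ Fin b → R :=
    Sum.elim (fun _ => 2 - xx) (fun _ => 1 - 2 * xx) with hv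
  set N : Matrix ((Fin a ⊕ Fin b) ⊕ Unit) ((Fin a ⊕ Fin b) ⊕ Unit) R :=
    Matrix.fromBlocks (Matrix.diagonal dvec) (Matrix.of fun i (_ : Unit) => vvec i)
      (Matrix.of fun (_ : Unit) _ => (1 : R)) (Matrix.of fun _ _ => xx) with hN
  set e : LVar a b ≃ (Fin a ⊕ Fin b) ⊕ Unit := (Equiv.sumAssoc (Fin a) (Fin b) Unit).symm with he
  have hLA : L * lambdaDX a b = N.submatrix e e := by
    have h1 : ∀ p q, (L * lambdaDX a b) p q
        = lambdaDX a b p q + w p * lambdaDX a b star q := by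
      intro p q
      rw [hL, Matrix.add_mul, Matrix.one_mul, Matrix.add_apply]
      congr 1
      rw [Matrix.mul_apply]
      have hterm : ∀ k, (Matrix.replicateCol Unit w * Matrix.replicateRow Unit sv) p k * lambdaDX a b k q
          = if k = star then w p * lambdaDX a b star q else 0 := by
        intro k
        by_cases h : k = star <;> simp [Matrix.mul_apply, hsv, h]
      simp only [hterm]
      rw [Finset.sum_ite_eq' Finset.univ star fun _ => w p * lambdaDX a b star q]
      simp
    ext p q : 1
    rw [h1]
    rcases p with i | r | u <;> rcases q with j | s' | u' <;>
      simp only [lambdaDX, hw, hstar, Matrix.of_apply, Sum.elim_inl, Sum.elim_inr,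
        Matrix.submatrix_apply, he, Equiv.sumAssoc_symm_apply_inl,
        Equiv.sumAssoc_symm_apply_inr_inl, Equiv.sumAssoc_symm_apply_inr_inr, hN,
        Matrix.fromBlocks_apply₁₁, Matrix.fromBlocks_apply₁₂, Matrix.fromBlocks_apply₂₁,
        Matrix.fromBlocks_apply₂₂, hv, hd]
    · by_cases h : i = j
      · subst h
        rw [Matrix.diagonal_apply_eq, if_pos rfl]
        simp only [Sum.elim_inl]
        ring
      · rw [Matrix.diagonal_apply_ne _ (by simp [h])]
        simp [h]
    · rw [Matrix.diagonal_apply_ne _ (by simp)]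
      simp
    · ring
    · rw [Matrix.diagonal_apply_ne _ (by simp)]
      simp
    · by_cases h : r = s'
      · subst h
        rw [Matrix.diagonal_apply_eq, if_pos rfl]
        simp only [Sum.elim_inr]
        ring
      · rw [Matrix.diagonal_apply_ne _ (by simp [h])]
        simp [h]
    · ring
    · simp
    · simp
    · (simp; rfl)
  have hdet : (lambdaDX a b).det = N.det := by
    rw [← Matrix.det_submatrix_equiv_self e N, ← hLA, Matrix.det_mul, hdetL, one_mul]
  rw [hdet, hN, det_arrow]
  rw [Fintype.prod_sum_type, Fintype.sum_sum_type]
  have ha : ∀ s : Fin a, (1 : R) * vvec (Sum.inl s) *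
      ∏ j ∈ Finset.univ.erase (Sum.inl s), dvec j
      = (2 - xx) * (∏ r : Fin b, (X (.inr (.inl r)) - 2)) *
        (∏ s' ∈ Finset.univ.erase s, (X (.inl s') - 1)) := by
    intro s
    rw [erase_inl_eq, Finset.prod_disjSum]
    simp only [hv, hd, Sum.elim_inl, Sum.elim_inr]
    ring
  have hb : ∀ r : Fin b, (1 : R) * vvec (Sum.inr r) *
      ∏ j ∈ Finset.univ.erase (Sum.inr r), dvec j
      = (1 - 2 * xx) * (∏ r' ∈ Finset.univ.erase r, (X (.inr (.inl r')) - 2)) *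
        (∏ s : Fin a, (X (.inl s) - 1)) := by
    intro r
    rw [erase_inr_eq, Finset.prod_disjSum]
    simp only [hv, hd, Sum.elim_inl, Sum.elim_inr]
    ring
  rw [Finset.sum_congr rfl fun s _ => ha s, Finset.sum_congr rfl fun r _ => hb r]
  simp only [hd, Sum.elim_inl, Sum.elim_inr]
  ring
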